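/- Let π be a probability measure on a measurable space Ω and let F : [0,1] × Ω → ℝ be bounded measurable with sup_ω |F(r, ω) − F(t, ω)| ≤ L_ab |r − t| for all r, t ∈ [0,1]. Fix t ∈ [0,1] and δ ∈ (0, 1] with t + δ ≤ 1. Let P be the Gibbs tilt of π by G(ω) := ∫_t^{t+δ} F(r, ω) dr and let Q be the Gibbs tilt of π by Ḡ(ω) := δ F(t, ω). Then ‖P − Q‖_TV ≤ C₁ δ², where C₁ := (1/2) L_ab e^{L_ab}. -/

import Mathlib

open MeasureTheory

set_option maxHeartbeats 1000000 in
/-- Local truncation error of the Euler-tilting scheme: freezing the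
time-Lipschitz tilting rate `F` over an interval of length `δ` perturbs the
exact Gibbs update of `π` by at most `(1/2) L_ab e^{L_ab} δ²` in total
variation (written as half the `L¹(π)` distance of the two Gibbs densities
`e^G / ∫ e^G dπ` and `e^Ḡ / ∫ e^Ḡ dπ` with `G = ∫ₜ^{t+δ} F_r dr`,
`Ḡ = δ F_t`). -/
theorem euler_tilting_local_error
    {Ω : Type*} [MeasurableSpace Ω]
    (π : Measure Ω) [IsProbabilityMeasure π]
    (F : ℝ → Ω → ℝ) (hFm : Measurable (Function.uncurry F))
    (M : ℝ) (hFb : ∀ r ω, |F r ω| ≤ M)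
    (Lab : ℝ)
    (hFlip : ∀ r ∈ Set.Icc (0:ℝ) 1, ∀ t ∈ Set.Icc (0:ℝ) 1, ∀ ω,
      |F r ω - F t ω| ≤ Lab * |r - t|)
    (t δ : ℝ) (ht0 : 0 ≤ t) (hδ0 : 0 < δ) (hδ1 : δ ≤ 1) (htδ : t + δ ≤ 1) :
    (1 / 2) * ∫ ω,
        |Real.exp (∫ r in t..(t + δ), F r ω)
            / (∫ ω', Real.exp (∫ r in t..(t + δ), F r ω') ∂π)
          - Real.exp (δ * F t ω) / (∫ ω', Real.exp (δ * F t ω') ∂π)| ∂π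
      ≤ (1 / 2) * Lab * Real.exp Lab * δ ^ 2 := by
  have hδt : t ≤ t + δ := by linarith
  -- Ω is nonempty
  have hne : Nonempty Ω := by
    by_contra h
    rw [not_nonempty_iff] at h
    have h1 : π Set.univ = 1 := measure_univ
    rw [Set.univ_eq_empty_iff.mpr h] at h1
    simp at h1
  obtain ⟨ω₀⟩ := hne
  have hM : 0 ≤ M := le_trans (abs_nonneg _) (hFb 0 ω₀)
  have hLab : 0 ≤ Lab := by
    have h := hFlip 0 ⟨le_refl _, zero_le_one⟩ 1 ⟨zero_le_one, le_refl _⟩ ω₀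
    have h0 : (0:ℝ) ≤ |F 0 ω₀ - F 1 ω₀| := abs_nonneg _
    simp only [zero_sub, abs_neg, abs_one, mul_one] at h
    linarith
  set ε := Lab * δ ^ 2 / 2 with hεdef
  have hε0 : 0 ≤ ε := by positivity
  -- measurability of r ↦ F r ω and ω ↦ F t ω
  have hmr : ∀ ω, Measurable fun r => F r ω := fun ω =>
    hFm.comp (measurable_id.prodMk measurable_const)
  have hmω : ∀ r, Measurable fun ω => F r ω := fun r =>
    hFm.comp (measurable_const.prodMk measurable_id)
  -- interval integrability
  have hIF : ∀ ω, IntervalIntegrable (fun r => F r ω) volume t (t + δ) := by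
    intro ω
    refine (intervalIntegrable_const (c := M)).mono_fun
      ((hmr ω).aestronglyMeasurable) (ae_of_all _ fun r => ?_)
    simp only [Real.norm_eq_abs]
    exact (hFb r ω).trans (le_abs_self M)
  -- the key Lipschitz bound on the exponents
  have hkey : ∀ ω, |(∫ r in t..(t + δ), F r ω) - δ * F t ω| ≤ ε := by
    intro ω
    have h1 : δ * F t ω = ∫ r in t..(t + δ), F t ω := by
      rw [intervalIntegral.integral_const, smul_eq_mul]; ring
    rw [h1, ← intervalIntegral.integral_sub (hIF ω) intervalIntegrable_const]
    have hg : IntervalIntegrable (fun r => Lab * (r - t)) volume t (t + δ) :=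
      (Continuous.intervalIntegrable (by continuity) t (t + δ))
    have hb : ∀ᵐ r ∂volume.restrict (Set.uIoc t (t + δ)),
        ‖F r ω - F t ω‖ ≤ Lab * (r - t) := by
      filter_upwards [ae_restrict_mem measurableSet_uIoc] with r hr
      rw [Set.uIoc_of_le hδt] at hr
      have hr1 : r ∈ Set.Icc (0:ℝ) 1 :=
        ⟨le_trans ht0 (le_of_lt hr.1), le_trans hr.2 htδ⟩
      have h := hFlip r hr1 t ⟨ht0, by linarith⟩ ω
      rw [abs_of_pos (by linarith [hr.1] : (0:ℝ) < r - t)] at h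
      simpa [Real.norm_eq_abs] using h
    have h2 := intervalIntegral.norm_integral_le_abs_of_norm_le hb hg
    have hcomp : (∫ r in t..(t + δ), Lab * (r - t)) = ε := by
      rw [intervalIntegral.integral_const_mul,
        intervalIntegral.integral_sub intervalIntegral.intervalIntegrable_id
          intervalIntegrable_const,
        integral_id, intervalIntegral.integral_const, smul_eq_mul]
      rw [hεdef]; ring
    rw [hcomp, abs_of_nonneg hε0] at h2
    simpa [Real.norm_eq_abs] using h2
  -- bound on exponents
  have hGbd : ∀ ω, |∫ r in t..(t + δ), F r ω| ≤ M * δ := by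
    intro ω
    have hb : ∀ᵐ r ∂volume.restrict (Set.uIoc t (t + δ)),
        ‖F r ω‖ ≤ M := ae_of_all _ fun r => by
      simpa [Real.norm_eq_abs] using hFb r ω
    have h2 := intervalIntegral.norm_integral_le_abs_of_norm_le hb intervalIntegrable_const
    rw [intervalIntegral.integral_const] at h2
    simp only [Real.norm_eq_abs] at h2
    calc |∫ r in t..(t + δ), F r ω| ≤ |(t + δ - t) * M| := h2
      _ = δ * M := by rw [abs_of_nonneg (by nlinarith)]; ring_nf
      _ = M * δ := by ring
  have hHbd : ∀ ω, |δ * F t ω| ≤ M * δ := by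
    intro ω
    rw [abs_mul, abs_of_pos hδ0]
    calc δ * |F t ω| ≤ δ * M := by
          have := hFb t ω; nlinarith
      _ = M * δ := by ring
  -- measurability of the exponents
  have hGm : Measurable fun ω => ∫ r in t..(t + δ), F r ω := by
    have hsm : StronglyMeasurable fun p : Ω × ℝ => F p.2 p.1 :=
      (hFm.comp measurable_swap).stronglyMeasurable
    have h := hsm.integral_prod_right' (ν := volume.restrict (Set.Ioc t (t + δ)))
    have heq : (fun ω => ∫ r in t..(t + δ), F r ω)
        = fun ω => ∫ r, F r ω ∂(volume.restrict (Set.Ioc t (t + δ))) := by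
      funext ω; rw [intervalIntegral.integral_of_le hδt]
    rw [heq]
    exact h.measurable
  have hHm : Measurable fun ω => δ * F t ω := (hmω t).const_mul δ
  -- integrability of the Gibbs weights
  have hIntG : Integrable (fun ω => Real.exp (∫ r in t..(t + δ), F r ω)) π := by
    refine Integrable.mono' (integrable_const (Real.exp (M * δ)))
      ((Real.measurable_exp.comp hGm).aestronglyMeasurable) (ae_of_all _ fun ω => ?_)
    rw [Real.norm_eq_abs, abs_of_pos (Real.exp_pos _)]
    exact Real.exp_le_exp.mpr ((le_abs_self _).trans (hGbd ω))
  have hIntH : Integrable (fun ω => Real.exp (δ * F t ω)) π := by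
    refine Integrable.mono' (integrable_const (Real.exp (M * δ)))
      ((Real.measurable_exp.comp hHm).aestronglyMeasurable) (ae_of_all _ fun ω => ?_)
    rw [Real.norm_eq_abs, abs_of_pos (Real.exp_pos _)]
    exact Real.exp_le_exp.mpr ((le_abs_self _).trans (hHbd ω))
  set Z := ∫ ω', Real.exp (∫ r in t..(t + δ), F r ω') ∂π with hZdef
  set W := ∫ ω', Real.exp (δ * F t ω') ∂π with hWdef
  -- positivity of normalizers
  have hWlb : Real.exp (-(M * δ)) ≤ W := by
    have h := integral_mono (integrable_const (Real.exp (-(M * δ)))) hIntH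
      (fun ω => Real.exp_le_exp.mpr (by have := hHbd ω; have := neg_abs_le (δ * F t ω); linarith))
    simpa using h
  have hWpos : 0 < W := lt_of_lt_of_le (Real.exp_pos _) hWlb
  -- comparison of normalizers
  have hZub : Z ≤ Real.exp ε * W := by
    have h := integral_mono hIntG (hIntH.const_mul (Real.exp ε))
      (fun ω => by
        rw [← Real.exp_add]
        refine Real.exp_le_exp.mpr ?_
        have := hkey ω; have := le_abs_self ((∫ r in t..(t + δ), F r ω) - δ * F t ω)
        linarith)
    rwa [integral_const_mul] at h
  have hZlb : Real.exp (-ε) * W ≤ Z := by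
    have h := integral_mono (hIntH.const_mul (Real.exp (-ε))) hIntG
      (fun ω => by
        rw [← Real.exp_add]
        refine Real.exp_le_exp.mpr ?_
        have := hkey ω; have := neg_abs_le ((∫ r in t..(t + δ), F r ω) - δ * F t ω)
        linarith)
    rwa [integral_const_mul] at h
  have hZpos : 0 < Z := lt_of_lt_of_le (by positivity) hZlb
  set E := Real.exp ε with hEdef
  have hE1 : 1 ≤ E := Real.one_le_exp hε0
  have hEpos : 0 < E := Real.exp_pos _
  have hEinv : Real.exp (-ε) = E⁻¹ := by rw [Real.exp_neg]
  have hWE : W ≤ E * Z := by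
    rw [hEinv] at hZlb
    calc W = E * (E⁻¹ * W) := by field_simp
      _ ≤ E * Z := by nlinarith
  -- pointwise density comparison
  have hpt : ∀ ω, |Real.exp (∫ r in t..(t + δ), F r ω) / Z - Real.exp (δ * F t ω) / W|
      ≤ (E ^ 2 - 1) * (Real.exp (δ * F t ω) / W) := by
    intro ω
    set g := Real.exp (∫ r in t..(t + δ), F r ω) with hgdef
    set h := Real.exp (δ * F t ω) with hhdef
    have hg0 : 0 < g := Real.exp_pos _
    have hh0 : 0 < h := Real.exp_pos _
    have hgub : g ≤ E * h := by
      rw [hgdef, hhdef, hEdef, ← Real.exp_add]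
      refine Real.exp_le_exp.mpr ?_
      have := hkey ω; have := le_abs_self ((∫ r in t..(t + δ), F r ω) - δ * F t ω)
      linarith
    have hglb : h ≤ E * g := by
      rw [hgdef, hhdef, hEdef, ← Real.exp_add]
      refine Real.exp_le_exp.mpr ?_
      have := hkey ω; have := neg_abs_le ((∫ r in t..(t + δ), F r ω) - δ * F t ω)
      linarith
    have hupper : g / Z ≤ E ^ 2 * (h / W) := by
      rw [← mul_div_assoc, div_le_div_iff₀ hZpos hWpos]
      have h1 := mul_le_mul hgub hWE hWpos.le (by positivity : (0:ℝ) ≤ E * h)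
      nlinarith
    have hlower : (2 - E ^ 2) * (h / W) ≤ g / Z := by
      rw [← mul_div_assoc, div_le_div_iff₀ hWpos hZpos]
      have hA : h * Z ≤ E ^ 2 * (g * W) := by
        have h1 := mul_le_mul hglb hZub hZpos.le (by positivity : (0:ℝ) ≤ E * g)
        nlinarith
      rcases le_or_gt (2 - E ^ 2) 0 with hc | hc
      · have h2 : (2 - E ^ 2) * (h * Z) ≤ 0 :=
          mul_nonpos_of_nonpos_of_nonneg hc (mul_pos hh0 hZpos).le
        have h4 : 0 < g * W := mul_pos hg0 hWpos
        linarith [h2, h4]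
      · have h3 : (2 - E ^ 2) * E ^ 2 ≤ 1 := by nlinarith [sq_nonneg (E ^ 2 - 1)]
        calc (2 - E ^ 2) * h * Z ≤ (2 - E ^ 2) * (E ^ 2 * (g * W)) := by
              rw [mul_assoc]
              exact mul_le_mul_of_nonneg_left hA hc.le
          _ ≤ 1 * (g * W) := by
              rw [← mul_assoc]
              exact mul_le_mul_of_nonneg_right h3 (by positivity)
          _ = g * W := one_mul _
    have hq0 : 0 < h / W := div_pos hh0 hWpos
    rw [abs_le]
    constructor
    · linarith
    · linarith
  -- integrate the pointwise bound
  have hIntLHS : Integrable (fun ω =>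
      |Real.exp (∫ r in t..(t + δ), F r ω) / Z - Real.exp (δ * F t ω) / W|) π :=
    ((hIntG.div_const Z).sub (hIntH.div_const W)).abs
  have hIntRHS : Integrable (fun ω => (E ^ 2 - 1) * (Real.exp (δ * F t ω) / W)) π :=
    (hIntH.div_const W).const_mul _
  have hmono := integral_mono hIntLHS hIntRHS hpt
  have hRHSval : ∫ ω, (E ^ 2 - 1) * (Real.exp (δ * F t ω) / W) ∂π = E ^ 2 - 1 := by
    simp only [div_eq_mul_inv]
    rw [integral_const_mul, integral_mul_const, ← hWdef,
      mul_inv_cancel₀ (ne_of_gt hWpos), mul_one]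
  rw [hRHSval] at hmono
  -- final numeric estimate : E^2 - 1 = e^{Lab δ²} - 1 ≤ Lab δ² e^{Lab}
  have hfinal : E ^ 2 - 1 ≤ Lab * Real.exp Lab * δ ^ 2 := by
    have hx : E ^ 2 = Real.exp (Lab * δ ^ 2) := by
      rw [hEdef, sq, ← Real.exp_add]
      congr 1
      rw [hεdef]; ring
    set x := Lab * δ ^ 2 with hxdef
    have hx0 : 0 ≤ x := by positivity
    have hδsq : δ ^ 2 ≤ 1 := by nlinarith
    have hxLab : x ≤ Lab := by nlinarith
    have hprod : Real.exp (-x) * Real.exp x = 1 := by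
      rw [← Real.exp_add]; simp
    have h1 : Real.exp x - 1 ≤ x * Real.exp x := by
      nlinarith [mul_le_mul_of_nonneg_right (Real.add_one_le_exp (-x))
        (Real.exp_pos x).le, hprod]
    have h2 : x * Real.exp x ≤ x * Real.exp Lab :=
      mul_le_mul_of_nonneg_left (Real.exp_le_exp.mpr hxLab) hx0
    rw [hx]
    calc Real.exp x - 1 ≤ x * Real.exp Lab := le_trans h1 h2
      _ = Lab * Real.exp Lab * δ ^ 2 := by rw [hxdef]; ring
  have : (∫ ω, |Real.exp (∫ r in t..(t + δ), F r ω) / Z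
      - Real.exp (δ * F t ω) / W| ∂π) ≤ Lab * Real.exp Lab * δ ^ 2 :=
    le_trans hmono hfinal
  linarith
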